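/- arXiv:2204.00586 — 2 statements merged into one kernel-verified Lean document; each statement's English description precedes it below -/
import Mathlib

section
/- Let ψ : ℝ → ℝ be differentiable at 0 with ψ(0) = 0 and define b : ℝ → ℝ by b(y) = ψ(y)/y for y ≠ 0 and b(0) = ψ′(0); assume b(y) ≥ 0 for all y. Let a_1,…,a_n ≥ 0, φ_1,…,φ_n ∈ ℝ, and suppose w ∈ ℝ satisfies ∑_{ℓ=1}^n a_ℓ ψ(φ_ℓ − w) = 0 with S := ∑_{ℓ=1}^n a_ℓ b(φ_ℓ − w) > 0. Define ā_ℓ = a_ℓ b(φ_ℓ − w)/S. Then each ā_ℓ ∈ [0,1], ∑_{ℓ=1}^n ā_ℓ = 1, w = ∑_{ℓ=1}^n ā_ℓ φ_ℓ, and in particular min_ℓ φ_ℓ ≤ w ≤ max_ℓ φ_ℓ. -/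
/-- Robust aggregation as a convex combination. Under nonnegative
modulation weights `b`, nonnegative combination weights `a`, the estimating equation
`∑ ℓ, a ℓ * ψ (φ ℓ - w) = 0`, and `S = ∑ ℓ, a ℓ * b (φ ℓ - w) > 0`, the effective
weights `ā ℓ = a ℓ * b (φ ℓ - w) / S` lie in `[0,1]`, sum to one, represent `w` as
`∑ ℓ, ā ℓ * φ ℓ`, and in particular `min φ ≤ w ≤ max φ`. -/
theorem m_estimate_convex_combination
    (ψ : ℝ → ℝ) (hψ0 : ψ 0 = 0) (dψ : ℝ) (hdψ : HasDerivAt ψ dψ 0)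
    (b : ℝ → ℝ) (hb : ∀ y : ℝ, y ≠ 0 → b y = ψ y / y) (hb0 : b 0 = dψ)
    (hbnn : ∀ y, 0 ≤ b y)
    (n : ℕ) (a φ : Fin n → ℝ) (ha : ∀ ℓ, 0 ≤ a ℓ) (w : ℝ)
    (heq : ∑ ℓ, a ℓ * ψ (φ ℓ - w) = 0)
    (hS : 0 < ∑ ℓ, a ℓ * b (φ ℓ - w)) :
    (∀ ℓ, a ℓ * b (φ ℓ - w) / (∑ j, a j * b (φ j - w)) ∈ Set.Icc (0 : ℝ) 1) ∧
    (∑ ℓ, a ℓ * b (φ ℓ - w) / (∑ j, a j * b (φ j - w)) = 1) ∧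
    (w = ∑ ℓ, (a ℓ * b (φ ℓ - w) / (∑ j, a j * b (φ j - w))) * φ ℓ) ∧
    ((⨅ ℓ, φ ℓ) ≤ w ∧ w ≤ ⨆ ℓ, φ ℓ) := by
  set S := ∑ j, a j * b (φ j - w) with hSdef
  have hψ : ∀ y : ℝ, ψ y = b y * y := by
    intro y
    rcases eq_or_ne y 0 with rfl | hy
    · simp [hψ0]
    · rw [hb y hy, div_mul_cancel₀ _ hy]
  have hcnn : ∀ ℓ, 0 ≤ a ℓ * b (φ ℓ - w) := fun ℓ => mul_nonneg (ha ℓ) (hbnn _)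
  have hSne : S ≠ 0 := ne_of_gt hS
  have hle : ∀ ℓ, a ℓ * b (φ ℓ - w) ≤ S := by
    intro ℓ
    exact Finset.single_le_sum (fun j _ => hcnn j) (Finset.mem_univ ℓ)
  have hmem : ∀ ℓ, a ℓ * b (φ ℓ - w) / S ∈ Set.Icc (0 : ℝ) 1 := by
    intro ℓ
    exact ⟨div_nonneg (hcnn ℓ) hS.le, (div_le_one hS).2 (hle ℓ)⟩
  have hsum1 : ∑ ℓ, a ℓ * b (φ ℓ - w) / S = 1 := by
    rw [← Finset.sum_div, ← hSdef, div_self hSne]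
  have hw : w = ∑ ℓ, (a ℓ * b (φ ℓ - w) / S) * φ ℓ := by
    have h1 : ∑ ℓ, a ℓ * b (φ ℓ - w) * φ ℓ - S * w = 0 := by
      calc ∑ ℓ, a ℓ * b (φ ℓ - w) * φ ℓ - S * w
          = ∑ ℓ, a ℓ * ψ (φ ℓ - w) := by
            rw [hSdef, Finset.sum_mul, ← Finset.sum_sub_distrib]
            exact Finset.sum_congr rfl fun ℓ _ => by rw [hψ]; ring
        _ = 0 := heq
    have h2 : ∑ ℓ, a ℓ * b (φ ℓ - w) * φ ℓ = S * w := by linarith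
    calc w = (S * w) / S := (mul_div_cancel_left₀ w hSne).symm
      _ = ∑ ℓ, (a ℓ * b (φ ℓ - w) / S) * φ ℓ := by
          rw [← h2, Finset.sum_div]
          exact Finset.sum_congr rfl fun ℓ _ => by ring
  refine ⟨hmem, hsum1, hw, ?_, ?_⟩
  · have hn : Nonempty (Fin n) := by
      by_contra h
      rw [not_nonempty_iff] at h
      simp [hSdef, Finset.sum_of_isEmpty] at hS
    calc (⨅ ℓ, φ ℓ) = (⨅ ℓ, φ ℓ) * ∑ ℓ, a ℓ * b (φ ℓ - w) / S := by rw [hsum1, mul_one]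
      _ = ∑ ℓ, (a ℓ * b (φ ℓ - w) / S) * (⨅ j, φ j) := by
          rw [Finset.mul_sum]; exact Finset.sum_congr rfl fun ℓ _ => by ring
      _ ≤ ∑ ℓ, (a ℓ * b (φ ℓ - w) / S) * φ ℓ := by
          apply Finset.sum_le_sum
          intro ℓ _
          exact mul_le_mul_of_nonneg_left (ciInf_le (Set.finite_range φ).bddBelow ℓ)
            (hmem ℓ).1
      _ = w := hw.symm
  · have hn : Nonempty (Fin n) := by
      by_contra h
      rw [not_nonempty_iff] at h
      simp [hSdef, Finset.sum_of_isEmpty] at hS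
    calc w = ∑ ℓ, (a ℓ * b (φ ℓ - w) / S) * φ ℓ := hw
      _ ≤ ∑ ℓ, (a ℓ * b (φ ℓ - w) / S) * (⨆ j, φ j) := by
          apply Finset.sum_le_sum
          intro ℓ _
          exact mul_le_mul_of_nonneg_left (le_ciSup (Set.finite_range φ).bddAbove ℓ)
            (hmem ℓ).1
      _ = (⨆ ℓ, φ ℓ) := by
          rw [← Finset.sum_mul, hsum1, one_mul]
end

section
/- Let J : ℝ^M → ℝ be ν-strongly convex with δ-Lipschitz gradient and minimizer w⁰, with ν, δ > 0. On a probability space with filtration (F_i), let (w_i)_{i≥0} be an adapted sequence satisfying w_i = w_{i−1} − μ(∇J(w_{i−1}) + s_i) with E[s_i | F_{i−1}] = 0 and E[‖s_i‖² | F_{i−1}] ≤ β²‖w⁰ − w_{i−1}‖² + σ² almost surely, where E‖w⁰ − w_0‖² < ∞. If 0 < μ < 2ν/(δ² + β²), then limsup_{i→∞} E‖w⁰ − w_i‖² ≤ μσ²/(2ν − μ(δ² + β²)); in particular there exist constants C > 0 and μ₀ > 0 such that limsup_{i→∞} E‖w⁰ − w_i‖² ≤ Cμ for all 0 < μ ≤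 μ₀. -/
open MeasureTheory Filter

/-- The stochastic-gradient process of the paper: `w` is adapted, evolves via
`w_{i+1} = w_i - μ (g(w_i) + s_{i+1})`, the gradient noise `s` is integrable with
integrable squared norm, has zero conditional mean, conditional second moment bounded
by `β² ‖w⁰ - w_i‖² + σ²`, and the initial mean-square deviation is finite. -/
def IsSGDProcess {Mdim : ℕ} {Ω : Type*} [MeasurableSpace Ω] (μpr : Measure Ω)
    (F : Filtration ℕ ‹MeasurableSpace Ω›)
    (g : EuclideanSpace ℝ (Fin Mdim) → EuclideanSpace ℝ (Fin Mdim))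
    (w0 : EuclideanSpace ℝ (Fin Mdim)) (β σ μstep : ℝ)
    (w s : ℕ → Ω → EuclideanSpace ℝ (Fin Mdim)) : Prop :=
  Adapted F w ∧ (∀ i, StronglyMeasurable (s i)) ∧
  (∀ i ω, w (i + 1) ω = w i ω - μstep • (g (w i ω) + s (i + 1) ω)) ∧
  (∀ i, Integrable (s (i + 1)) μpr) ∧
  (∀ i, Integrable (fun ω => ‖s (i + 1) ω‖ ^ 2) μpr) ∧
  (∀ i, μpr[s (i + 1) | F i] =ᵐ[μpr] 0) ∧
  (∀ i, ∀ᵐ ω ∂μpr,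
    (μpr[fun ω' => ‖s (i + 1) ω'‖ ^ 2 | F i]) ω ≤ β ^ 2 * ‖w0 - w i ω‖ ^ 2 + σ ^ 2) ∧
  Integrable (fun ω => ‖w0 - w 0 ω‖ ^ 2) μpr

/-- Deterministic contraction lemma for limsup of a recursively bounded sequence. -/
lemma seq_limsup_le' {a : ℕ → ℝ} {A c : ℝ} (hA0 : 0 ≤ A) (hA1 : A < 1) (hc : 0 ≤ c)
    (ha0 : ∀ i, 0 ≤ a i) (hrec : ∀ i, a (i + 1) ≤ A * a i + c) :
    limsup a atTop ≤ c / (1 - A) := by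
  have h1A : 0 < 1 - A := by linarith
  have key : ∀ i, a i ≤ A ^ i * a 0 + c / (1 - A) := by
    intro i
    induction i with
    | zero =>
      have : 0 ≤ c / (1 - A) := div_nonneg hc h1A.le
      simpa using by linarith [this]
    | succ n ih =>
      have h3 : A * a n ≤ A * (A ^ n * a 0 + c / (1 - A)) :=
        mul_le_mul_of_nonneg_left ih hA0
      have h4 : A * (A ^ n * a 0 + c / (1 - A)) + c = A ^ (n + 1) * a 0 + c / (1 - A) := by
        field_simp
        ring
      have := hrec n
      linarith
  have htend : Tendsto (fun i => A ^ i * a 0 + c / (1 - A)) atTop (nhds (0 * a 0 + c / (1 - A))) :=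
    ((tendsto_pow_atTop_nhds_zero_of_lt_one hA0 hA1).mul_const _).add_const _
  have hcb : Filter.IsCoboundedUnder (· ≤ ·) atTop a :=
    Filter.isCoboundedUnder_le_of_le atTop ha0
  calc limsup a atTop ≤ limsup (fun i => A ^ i * a 0 + c / (1 - A)) atTop :=
        limsup_le_limsup (Filter.Eventually.of_forall key) hcb htend.isBoundedUnder_le
    _ = 0 * a 0 + c / (1 - A) := htend.limsup_eq
    _ = c / (1 - A) := by ring

lemma coord_abs_le_norm {n : ℕ} (x : EuclideanSpace ℝ (Fin n)) (k : Fin n) : |x k| ≤ ‖x‖ := by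
  have h := abs_real_inner_le_norm (EuclideanSpace.single k (1 : ℝ)) x
  simpa [EuclideanSpace.inner_single_left, EuclideanSpace.norm_single] using h

/-- Components of a vector-valued zero conditional expectation are zero. -/
lemma condexp_coord_zero {Ω : Type*} {m m0 : MeasurableSpace Ω} (hm : m ≤ m0)
    (μ : Measure Ω) [IsFiniteMeasure μ] {n : ℕ} {f : Ω → EuclideanSpace ℝ (Fin n)}
    (hf : Integrable f μ) (hf0 : μ[f|m] =ᵐ[μ] 0) (k : Fin n) :
    μ[fun ω => f ω k|m] =ᵐ[μ] 0 := by
  haveI : SigmaFinite (μ.trim hm) := inferInstance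
  have hfk : Integrable (fun ω => f ω k) μ := by
    have := (EuclideanSpace.proj (𝕜 := ℝ) k).integrable_comp hf
    simpa using this
  refine (ae_eq_condExp_of_forall_setIntegral_eq hm hfk
    (fun s _ _ => integrableOn_zero)
    (fun s hs hμs => ?_)
    (StronglyMeasurable.aestronglyMeasurable
      (stronglyMeasurable_const : StronglyMeasurable[m] (fun _ : Ω => (0 : ℝ))))).symm
  have h1 : ∫ x in s, f x k ∂μ = (EuclideanSpace.proj k) (∫ x in s, f x ∂μ) :=
    ((EuclideanSpace.proj k).integral_comp_comm hf.integrableOn)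
  have h2 : ∫ x in s, f x ∂μ = ∫ x in s, (μ[f|m]) x ∂μ := (setIntegral_condExp hm hf hs).symm
  have h3 : ∫ x in s, (μ[f|m]) x ∂μ = 0 := by
    rw [integral_congr_ae (ae_restrict_of_ae hf0)]
    simp
  rw [integral_zero, h1, h2, h3]
  simp
set_option maxHeartbeats 1000000 in
open scoped RealInnerProductSpace in
theorem sgd_msd_aux
    {Mdim : ℕ} {Ω : Type*} [MeasurableSpace Ω]
    (μpr : Measure Ω) [IsProbabilityMeasure μpr]
    (F : Filtration ℕ ‹MeasurableSpace Ω›)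
    (g : EuclideanSpace ℝ (Fin Mdim) → EuclideanSpace ℝ (Fin Mdim))
    (ν δ : ℝ) (hν : 0 < ν) (hδ : 0 < δ) (hνδ : ν ≤ δ)
    (hstrong : ∀ x y, ν * ‖x - y‖ ^ 2 ≤ ⟪x - y, g x - g y⟫)
    (hlip : ∀ x y, ‖g x - g y‖ ≤ δ * ‖x - y‖)
    (w0 : EuclideanSpace ℝ (Fin Mdim)) (hg0 : g w0 = 0)
    (β σ : ℝ) (μ' : ℝ) (h0 : 0 < μ') (h1 : μ' < 2 * ν / (δ ^ 2 + β ^ 2))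
    (w s : ℕ → Ω → EuclideanSpace ℝ (Fin Mdim))
    (hproc : IsSGDProcess μpr F g w0 β σ μ' w s) :
    limsup (fun i => ∫ ω, ‖w0 - w i ω‖ ^ 2 ∂μpr) atTop ≤
      μ' * σ ^ 2 / (2 * ν - μ' * (δ ^ 2 + β ^ 2)) := by
  obtain ⟨hadapt, hsmeas, hrec, hsint, hs2int, hszero, hsbound, hinit⟩ := hproc
  set a : ℕ → ℝ := fun i => ∫ ω, ‖w0 - w i ω‖ ^ 2 ∂μpr with ha
  set A1 : ℝ := 1 - 2 * μ' * ν + μ' ^ 2 * δ ^ 2 with hA1def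
  set A : ℝ := 1 - 2 * μ' * ν + μ' ^ 2 * (δ ^ 2 + β ^ 2) with hAdef
  have hD : (0 : ℝ) < δ ^ 2 + β ^ 2 := by positivity
  have hμD : μ' * (δ ^ 2 + β ^ 2) < 2 * ν := (lt_div_iff₀ hD).mp h1
  have hA10 : 0 ≤ A1 := by
    nlinarith [sq_nonneg (1 - μ' * δ), mul_le_mul_of_nonneg_left hνδ h0.le]
  have hA0 : 0 ≤ A := by nlinarith [sq_nonneg (μ' * β)]
  have hAlt1 : A < 1 := by nlinarith [mul_pos h0 (by linarith : (0:ℝ) < 2 * ν - μ' * (δ ^ 2 + β ^ 2))]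
  have hwm : ∀ j, StronglyMeasurable (w j) := fun j => ((hadapt j).mono (F.le j) le_rfl).stronglyMeasurable
  have hglip : LipschitzWith δ.toNNReal g := by
    refine LipschitzWith.of_dist_le_mul fun x y => ?_
    rw [dist_eq_norm, dist_eq_norm]
    simpa [Real.coe_toNNReal δ hδ.le] using hlip x y
  have hgcont : Continuous g := hglip.continuous
  -- one-step lemma
  have onestep : ∀ i, Integrable (fun ω => ‖w0 - w i ω‖ ^ 2) μpr →
      (Integrable (fun ω => ‖w0 - w (i + 1) ω‖ ^ 2) μpr ∧ a (i + 1) ≤ A * a i + μ' ^ 2 * σ ^ 2) := by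
    intro i hi
    set u : Ω → EuclideanSpace ℝ (Fin Mdim) :=
      fun ω => (w0 - w i ω) + μ' • g (w i ω) with hu
    have hux : ∀ ω, w0 - w (i + 1) ω = u ω + μ' • s (i + 1) ω := by
      intro ω
      rw [hu]
      simp only [hrec i ω, smul_add]
      abel
    have hu_sq : ∀ ω, ‖u ω‖ ^ 2 ≤ A1 * ‖w0 - w i ω‖ ^ 2 := by
      intro ω
      have e1 : u ω = (w0 - w i ω) + μ' • (g (w i ω) - g w0) := by rw [hu, hg0, sub_zero]
      have e2 : ‖u ω‖ ^ 2 = ‖w0 - w i ω‖ ^ 2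
          + 2 * (μ' * ⟪w0 - w i ω, g (w i ω) - g w0⟫)
          + μ' ^ 2 * ‖g (w i ω) - g w0‖ ^ 2 := by
        rw [e1, norm_add_sq_real, real_inner_smul_right, norm_smul, Real.norm_eq_abs,
          mul_pow, sq_abs]
      have h4 : ⟪w0 - w i ω, g (w i ω) - g w0⟫ = -⟪w0 - w i ω, g w0 - g (w i ω)⟫ := by
        have hns : g (w i ω) - g w0 = -(g w0 - g (w i ω)) := (neg_sub _ _).symm
        rw [hns, inner_neg_right]
      have h5 : ‖w i ω - w0‖ = ‖w0 - w i ω‖ := norm_sub_rev _ _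
      have h2' : ‖g (w i ω) - g w0‖ ^ 2 ≤ δ ^ 2 * ‖w0 - w i ω‖ ^ 2 := by
        have h2 := hlip (w i ω) w0
        rw [h5] at h2
        nlinarith [norm_nonneg (g (w i ω) - g w0), norm_nonneg (w0 - w i ω)]
      have hstr := hstrong w0 (w i ω)
      rw [e2, h4, hA1def]
      nlinarith [mul_le_mul_of_nonneg_left hstr h0.le,
        mul_le_mul_of_nonneg_left h2' (sq_nonneg μ')]
    have hum : StronglyMeasurable u :=
      (stronglyMeasurable_const.sub (hwm i)).add
        ((hgcont.comp_stronglyMeasurable (hwm i)).const_smul μ')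
    have humF : StronglyMeasurable[F i] u :=
      (stronglyMeasurable_const.sub (hadapt i).stronglyMeasurable).add
        ((hgcont.comp_stronglyMeasurable (hadapt i).stronglyMeasurable).const_smul μ')
    have hsm : StronglyMeasurable (s (i + 1)) := hsmeas (i + 1)
    have hu2m : StronglyMeasurable (fun ω => ‖u ω‖ ^ 2) := hum.norm.pow 2
    have hu2int : Integrable (fun ω => ‖u ω‖ ^ 2) μpr := by
      refine Integrable.mono (hi.const_mul A1) hu2m.aestronglyMeasurable
        (Filter.Eventually.of_forall fun ω => ?_)
      rw [Real.norm_eq_abs, Real.norm_eq_abs, abs_of_nonneg (sq_nonneg _)]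
      exact le_trans (hu_sq ω) (le_abs_self _)
    have hprod_int : ∀ k : Fin Mdim, Integrable (fun ω => u ω k * s (i + 1) ω k) μpr := by
      intro k
      refine Integrable.mono (hu2int.add (hs2int i))
        ((((EuclideanSpace.proj (𝕜 := ℝ) k).continuous.comp_stronglyMeasurable hum).mul
          ((EuclideanSpace.proj (𝕜 := ℝ) k).continuous.comp_stronglyMeasurable
            hsm)).aestronglyMeasurable)
        (Filter.Eventually.of_forall fun ω => ?_)
      have hk1 := coord_abs_le_norm (u ω) k
      have hk2 := coord_abs_le_norm (s (i + 1) ω) k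
      rw [Real.norm_eq_abs, Real.norm_eq_abs, abs_mul]
      have hm1 : |u ω k| * |s (i + 1) ω k| ≤ ‖u ω‖ * ‖s (i + 1) ω‖ :=
        mul_le_mul hk1 hk2 (abs_nonneg _) (norm_nonneg _)
      have hb : |u ω k| * |s (i + 1) ω k| ≤ ‖u ω‖ ^ 2 + ‖s (i + 1) ω‖ ^ 2 := by
        nlinarith [sq_nonneg (‖u ω‖ - ‖s (i + 1) ω‖), sq_nonneg (‖u ω‖ + ‖s (i + 1) ω‖)]
      exact le_trans hb (le_abs_self _)
    have hinner_int : Integrable (fun ω => ⟪u ω, s (i + 1) ω⟫) μpr := by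
      refine Integrable.mono (hu2int.add (hs2int i))
        ((hum.inner hsm).aestronglyMeasurable) (Filter.Eventually.of_forall fun ω => ?_)
      rw [Real.norm_eq_abs]
      have hb := abs_real_inner_le_norm (u ω) (s (i + 1) ω)
      have : |⟪u ω, s (i + 1) ω⟫| ≤ ‖u ω‖ ^ 2 + ‖s (i + 1) ω‖ ^ 2 := by
        nlinarith [norm_nonneg (u ω), norm_nonneg (s (i + 1) ω),
          sq_nonneg (‖u ω‖ - ‖s (i + 1) ω‖)]
      exact le_trans this (le_abs_self _)
    -- cross term has zero mean
    have hprod0 : ∀ k : Fin Mdim, ∫ ω, u ω k * s (i + 1) ω k ∂μpr = 0 := by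
      intro k
      have hker : μpr[fun ω => s (i + 1) ω k|F i] =ᵐ[μpr] 0 :=
        condexp_coord_zero (F.le i) μpr (hsint i) (hszero i) k
      have hskint : Integrable (fun ω => s (i + 1) ω k) μpr := by
        have := (EuclideanSpace.proj (𝕜 := ℝ) k).integrable_comp (hsint i)
        simpa using this
      have humFk : StronglyMeasurable[F i] (fun ω => u ω k) :=
        (EuclideanSpace.proj (𝕜 := ℝ) k).continuous.comp_stronglyMeasurable humF
      have hmul := condExp_mul_of_stronglyMeasurable_left (μ := μpr) humFk
        (by exact hprod_int k) hskint
      have hzero : μpr[(fun ω => u ω k) * fun ω => s (i + 1) ω k|F i] =ᵐ[μpr] 0 := by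
        refine hmul.trans ?_
        filter_upwards [hker] with ω hω
        simp [hω]
      have hic := integral_condExp (μ := μpr)
        (f := (fun ω => u ω k) * fun ω => s (i + 1) ω k) (F.le i)
      calc ∫ ω, u ω k * s (i + 1) ω k ∂μpr
          = ∫ ω, ((fun ω => u ω k) * fun ω => s (i + 1) ω k) ω ∂μpr := rfl
        _ = ∫ x, (μpr[(fun ω => u ω k) * fun ω => s (i + 1) ω k|F i]) x ∂μpr := hic.symm
        _ = 0 := by rw [integral_congr_ae hzero]; simp
    have hcross : ∫ ω, ⟪u ω, s (i + 1) ω⟫ ∂μpr = 0 := by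
      have hpt : ∀ ω, ⟪u ω, s (i + 1) ω⟫ = ∑ k, u ω k * s (i + 1) ω k := by
        intro ω
        simp [PiLp.inner_apply, RCLike.inner_apply, conj_trivial, mul_comm]
      simp_rw [hpt]
      rw [integral_finset_sum _ fun k _ => hprod_int k]
      exact Finset.sum_eq_zero fun k _ => hprod0 k
    -- noise second moment
    have hs2 : ∫ ω, ‖s (i + 1) ω‖ ^ 2 ∂μpr ≤ β ^ 2 * a i + σ ^ 2 := by
      have heq : ∫ ω, ‖s (i + 1) ω‖ ^ 2 ∂μpr
          = ∫ ω, (μpr[fun ω' => ‖s (i + 1) ω'‖ ^ 2|F i]) ω ∂μpr :=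
        (integral_condExp (F.le i)).symm
      have hmono : ∫ ω, (μpr[fun ω' => ‖s (i + 1) ω'‖ ^ 2|F i]) ω ∂μpr
          ≤ ∫ ω, (β ^ 2 * ‖w0 - w i ω‖ ^ 2 + σ ^ 2) ∂μpr :=
        integral_mono_ae integrable_condExp ((hi.const_mul _).add (integrable_const _))
          (hsbound i)
      have hval : ∫ ω, (β ^ 2 * ‖w0 - w i ω‖ ^ 2 + σ ^ 2) ∂μpr = β ^ 2 * a i + σ ^ 2 := by
        rw [integral_add (hi.const_mul _) (integrable_const _), integral_const_mul,
          integral_const]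
        simp [ha, measure_univ]
      rw [heq]
      rw [hval] at hmono
      exact hmono
    -- expansion
    have hexp : (fun ω => ‖w0 - w (i + 1) ω‖ ^ 2)
        = fun ω => ‖u ω‖ ^ 2 + (2 * μ') * ⟪u ω, s (i + 1) ω⟫ + μ' ^ 2 * ‖s (i + 1) ω‖ ^ 2 := by
      funext ω
      rw [hux ω, norm_add_sq_real, real_inner_smul_right, norm_smul, Real.norm_eq_abs,
        mul_pow, sq_abs]
      ring
    have hint_next : Integrable (fun ω => ‖w0 - w (i + 1) ω‖ ^ 2) μpr := by
      rw [hexp]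
      exact (hu2int.add (hinner_int.const_mul _)).add ((hs2int i).const_mul _)
    refine ⟨hint_next, ?_⟩
    have hval : a (i + 1) = ∫ ω, ‖u ω‖ ^ 2 ∂μpr
        + (2 * μ') * ∫ ω, ⟪u ω, s (i + 1) ω⟫ ∂μpr
        + μ' ^ 2 * ∫ ω, ‖s (i + 1) ω‖ ^ 2 ∂μpr := by
      have I1 : Integrable
          (fun ω => ‖u ω‖ ^ 2 + 2 * μ' * ⟪u ω, s (i + 1) ω⟫) μpr :=
        hu2int.add (hinner_int.const_mul _)
      have I2 : Integrable (fun ω => μ' ^ 2 * ‖s (i + 1) ω‖ ^ 2) μpr :=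
        (hs2int i).const_mul _
      have I3 : Integrable (fun ω => 2 * μ' * ⟪u ω, s (i + 1) ω⟫) μpr :=
        hinner_int.const_mul _
      rw [ha]
      simp only [hexp]
      rw [integral_add I1 I2, integral_add hu2int I3, integral_const_mul, integral_const_mul]
    have hu2le : ∫ ω, ‖u ω‖ ^ 2 ∂μpr ≤ A1 * a i := by
      have := integral_mono hu2int (hi.const_mul A1) hu_sq
      rwa [integral_const_mul] at this
    have hs2le : μ' ^ 2 * ∫ ω, ‖s (i + 1) ω‖ ^ 2 ∂μpr ≤ μ' ^ 2 * (β ^ 2 * a i + σ ^ 2) :=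
      mul_le_mul_of_nonneg_left hs2 (sq_nonneg μ')
    have hAA : A1 * a i + μ' ^ 2 * (β ^ 2 * a i + σ ^ 2) = A * a i + μ' ^ 2 * σ ^ 2 := by
      rw [hA1def, hAdef]; ring
    rw [hval, hcross]
    linarith
  have hint : ∀ i, Integrable (fun ω => ‖w0 - w i ω‖ ^ 2) μpr := by
    intro i
    induction i with
    | zero => exact hinit
    | succ n ih => exact (onestep n ih).1
  have hrec' : ∀ i, a (i + 1) ≤ A * a i + μ' ^ 2 * σ ^ 2 := fun i => (onestep i (hint i)).2
  have ha0 : ∀ i, 0 ≤ a i := fun i => integral_nonneg fun ω => sq_nonneg _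
  have hlim := seq_limsup_le' hA0 hAlt1 (by positivity) ha0 hrec'
  have hfin : μ' ^ 2 * σ ^ 2 / (1 - A) = μ' * σ ^ 2 / (2 * ν - μ' * (δ ^ 2 + β ^ 2)) := by
    rw [hAdef]
    rw [show (1 - (1 - 2 * μ' * ν + μ' ^ 2 * (δ ^ 2 + β ^ 2)))
        = μ' * (2 * ν - μ' * (δ ^ 2 + β ^ 2)) by ring,
      show μ' ^ 2 * σ ^ 2 = μ' * (μ' * σ ^ 2) by ring,
      mul_div_mul_left _ _ (ne_of_gt h0)]
  rw [← hfin]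
  exact hlim

open scoped RealInnerProductSpace in
/-- Steady-state mean-square-deviation bound for constant step-size
stochastic gradient descent: if `0 < μ < 2ν/(δ² + β²)` then
`limsup_i E‖w⁰ - w_i‖² ≤ μσ²/(2ν - μ(δ² + β²))`; in particular there are constants
`C > 0` and `μ₀ > 0` such that `limsup_i E‖w⁰ - w_i‖² ≤ Cμ` for every step-size
`0 < μ ≤ μ₀` (and every process run with that step-size). -/
theorem sgd_steady_state_msd
    {Mdim : ℕ} {Ω : Type*} [MeasurableSpace Ω]
    (μpr : Measure Ω) [IsProbabilityMeasure μpr]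
    (F : Filtration ℕ ‹MeasurableSpace Ω›)
    (J : EuclideanSpace ℝ (Fin Mdim) → ℝ)
    (g : EuclideanSpace ℝ (Fin Mdim) → EuclideanSpace ℝ (Fin Mdim))
    (hgrad : ∀ x, HasGradientAt J (g x) x)
    (ν δ : ℝ) (hν : 0 < ν) (hδ : 0 < δ)
    (hstrong : ∀ x y, ν * ‖x - y‖ ^ 2 ≤ ⟪x - y, g x - g y⟫)
    (hlip : ∀ x y, ‖g x - g y‖ ≤ δ * ‖x - y‖)
    (w0 : EuclideanSpace ℝ (Fin Mdim)) (hmin : ∀ w, J w0 ≤ J w)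
    (β σ : ℝ) (μstep : ℝ) (hμ0 : 0 < μstep) (hμ1 : μstep < 2 * ν / (δ ^ 2 + β ^ 2))
    (w s : ℕ → Ω → EuclideanSpace ℝ (Fin Mdim))
    (hproc : IsSGDProcess μpr F g w0 β σ μstep w s) :
    limsup (fun i => ∫ ω, ‖w0 - w i ω‖ ^ 2 ∂μpr) atTop ≤
        μstep * σ ^ 2 / (2 * ν - μstep * (δ ^ 2 + β ^ 2)) ∧
    ∃ C > (0 : ℝ), ∃ μ₀ > (0 : ℝ), ∀ μ' : ℝ, 0 < μ' → μ' ≤ μ₀ →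
      ∀ w' s' : ℕ → Ω → EuclideanSpace ℝ (Fin Mdim),
        IsSGDProcess μpr F g w0 β σ μ' w' s' →
        limsup (fun i => ∫ ω, ‖w0 - w' i ω‖ ^ 2 ∂μpr) atTop ≤ C * μ' := by
  have hD : (0 : ℝ) < δ ^ 2 + β ^ 2 := by positivity
  have hg0 : g w0 = 0 := by
    have hloc : IsLocalMin J w0 := Filter.Eventually.of_forall hmin
    have hfd := (hgrad w0).hasFDerivAt
    have hz := hloc.hasFDerivAt_eq_zero hfd
    exact (LinearIsometryEquiv.map_eq_zero_iff _).mp hz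
  have main : ∀ μ₂ : ℝ, 0 < μ₂ → μ₂ < 2 * ν / (δ ^ 2 + β ^ 2) →
      ∀ w' s' : ℕ → Ω → EuclideanSpace ℝ (Fin Mdim),
        IsSGDProcess μpr F g w0 β σ μ₂ w' s' →
        limsup (fun i => ∫ ω, ‖w0 - w' i ω‖ ^ 2 ∂μpr) atTop ≤
          μ₂ * σ ^ 2 / (2 * ν - μ₂ * (δ ^ 2 + β ^ 2)) := by
    intro μ₂ h0 h1 w' s' hp
    rcases Nat.eq_zero_or_pos Mdim with hM | hM
    · haveI hie : IsEmpty (Fin Mdim) := by subst hM; infer_instance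
      have hz : ∀ i, (∫ ω, ‖w0 - w' i ω‖ ^ 2 ∂μpr) = 0 := by
        intro i
        have hzz : ∀ ω, w0 - w' i ω = 0 := fun ω => PiLp.ext fun k => isEmptyElim k
        simp [hzz]
      rw [show (fun i => ∫ ω, ‖w0 - w' i ω‖ ^ 2 ∂μpr) = fun _ : ℕ => (0 : ℝ) from
        funext fun i => hz i, limsup_const]
      have hden : 0 < 2 * ν - μ₂ * (δ ^ 2 + β ^ 2) := by
        linarith [(lt_div_iff₀ hD).mp h1]
      positivity
    · have hνδ : ν ≤ δ := by
        set x : EuclideanSpace ℝ (Fin Mdim) := EuclideanSpace.single ⟨0, hM⟩ (1 : ℝ) with hx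
        have hxn : ‖x‖ = 1 := by simp [hx]
        have h1' := hstrong x 0
        have h2' := hlip x 0
        have h3' := real_inner_le_norm (x - 0) (g x - g 0)
        rw [sub_zero] at h1' h2' h3'
        rw [hxn] at h1' h2' h3'
        nlinarith [norm_nonneg (g x - g 0)]
      exact sgd_msd_aux μpr F g ν δ hν hδ hνδ hstrong hlip w0 hg0 β σ μ₂ h0 h1 w' s' hp
  refine ⟨main μstep hμ0 hμ1 w s hproc, max (σ ^ 2 / ν) 1,
    lt_of_lt_of_le one_pos (le_max_right _ _), ν / (δ ^ 2 + β ^ 2), by positivity, ?_⟩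
  intro μ₂ h0 h2 w' s' hp
  have h1 : μ₂ < 2 * ν / (δ ^ 2 + β ^ 2) := by
    refine lt_of_le_of_lt h2 ?_
    gcongr
    · linarith
  have hb := main μ₂ h0 h1 w' s' hp
  have hμν : μ₂ * (δ ^ 2 + β ^ 2) ≤ ν := (le_div_iff₀ hD).mp h2
  have hden : ν ≤ 2 * ν - μ₂ * (δ ^ 2 + β ^ 2) := by linarith
  have hstep1 : μ₂ * σ ^ 2 / (2 * ν - μ₂ * (δ ^ 2 + β ^ 2)) ≤ μ₂ * σ ^ 2 / ν := by
    gcongr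
  have hstep2 : μ₂ * σ ^ 2 / ν ≤ max (σ ^ 2 / ν) 1 * μ₂ := by
    rw [show μ₂ * σ ^ 2 / ν = σ ^ 2 / ν * μ₂ by ring]
    exact mul_le_mul_of_nonneg_right (le_max_left _ _) h0.le
  linarith
end
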